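/- For every integer h ≥ 4 there exists a prime graph H in the class 𝓗 with exactly h vertices, where 𝓗 is the class of graphs all of whose prime induced subgraphs H' with at least 3 vertices have both a vertex of degree 1 and a vertex of degree |H'|−2. Specifically: P₄ and the bull are prime members of 𝓗, and if H ∈ 𝓗 is prime with a degree-one vertex v adjacent to u, then the graph obtained from H by adding one new vertex adjacent to all of V(H) and another new vertex adjacent only to u is a prime member of 𝓗 with |H|+2 vertices. -/

import Mathlib

/-- All vertices of `S` have the same neighbourhood outside `S`. -/
def SameNbhdOutside {V : Type*} (G : SimpleGraph V) (S : Set V) : Prop :=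
  ∀ u ∈ S, ∀ v ∈ S, ∀ w ∉ S, (G.Adj u w ↔ G.Adj v w)

/-- `G` is prime: no proper subset `S` of the vertices with `|S| ≥ 2` is a homogeneous
set (all of whose members have the same neighbourhood outside `S`). -/
def GraphPrime {V : Type*} (G : SimpleGraph V) : Prop :=
  ¬ ∃ S : Set V, 2 ≤ S.ncard ∧ S ≠ Set.univ ∧ SameNbhdOutside G S

/-- The degree of a vertex. -/
noncomputable def idegree {V : Type*} (G : SimpleGraph V) (v : V) : ℕ :=
  Nat.card (G.neighborSet v)

/-- `G ∈ 𝓗`: every prime induced subgraph on at least 3 vertices has a vertex of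
degree one and a vertex of degree (number of vertices minus 2). -/
def InH {V : Type*} (G : SimpleGraph V) : Prop :=
  ∀ S : Set V, 3 ≤ S.ncard → GraphPrime (G.induce S) →
    (∃ x, idegree (G.induce S) x = 1) ∧ (∃ x, idegree (G.induce S) x = S.ncard - 2)

lemma idegree_eq_degree {V : Type*} [Fintype V] (G : SimpleGraph V) [DecidableRel G.Adj] (v : V) :
    idegree G v = G.degree v := by
  rw [idegree, Nat.card_eq_fintype_card, SimpleGraph.card_neighborSet_eq_degree]

def PrimeF {V : Type*} [Fintype V] [DecidableEq V] (G : SimpleGraph V) [DecidableRel G.Adj] : Prop :=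
  ¬ ∃ s : Finset V, 2 ≤ s.card ∧ s ≠ Finset.univ ∧ ∀ u ∈ s, ∀ v ∈ s, ∀ w ∉ s, (G.Adj u w ↔ G.Adj v w)

instance {V : Type*} [Fintype V] [DecidableEq V] (G : SimpleGraph V) [DecidableRel G.Adj] :
    Decidable (PrimeF G) := by unfold PrimeF; infer_instance

lemma graphPrime_iff_primeF {V : Type*} [Fintype V] [DecidableEq V] (G : SimpleGraph V)
    [DecidableRel G.Adj] : GraphPrime G ↔ PrimeF G := by
  rw [GraphPrime, PrimeF, not_iff_not]
  constructor
  · rintro ⟨S, h2, hne, hS⟩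
    haveI : Fintype ↑S := Fintype.ofFinite ↑S
    refine ⟨S.toFinset, ?_, ?_, ?_⟩
    · rwa [← Set.ncard_coe_finset, Set.coe_toFinset]
    · intro hu; apply hne; rw [← Set.coe_toFinset S, hu]; simp
    · intro u hu v hv w hw
      exact hS u (Set.mem_toFinset.mp hu) v (Set.mem_toFinset.mp hv) w
        (fun hc => hw (Set.mem_toFinset.mpr hc))
  · rintro ⟨s, h2, hne, hs⟩
    refine ⟨↑s, by rwa [Set.ncard_coe_finset], by simpa [Finset.coe_eq_univ], ?_⟩
    intro u hu v hv w hw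
    exact hs u hu v hv w hw

def InHF {V : Type*} [Fintype V] [DecidableEq V] (G : SimpleGraph V) [DecidableRel G.Adj] : Prop :=
  ∀ s : Finset V, 3 ≤ s.card → PrimeF (G.induce (↑s : Set V)) →
    (∃ x, (G.induce (↑s : Set V)).degree x = 1) ∧
    (∃ x, (G.induce (↑s : Set V)).degree x = s.card - 2)

instance {V : Type*} [Fintype V] [DecidableEq V] (G : SimpleGraph V) [DecidableRel G.Adj] :
    Decidable (InHF G) := by unfold InHF; infer_instance

lemma inH_iff_inHF {V : Type*} [Fintype V] [DecidableEq V] (G : SimpleGraph V)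
    [DecidableRel G.Adj] : InH G ↔ InHF G := by
  constructor
  · intro h s h3 hp
    have := h ↑s (by rwa [Set.ncard_coe_finset]) ((graphPrime_iff_primeF _).mpr hp)
    rw [Set.ncard_coe_finset] at this
    simpa only [idegree_eq_degree] using this
  · intro h S h3 hp
    obtain ⟨s, rfl⟩ : ∃ s : Finset V, (↑s : Set V) = S :=
      ⟨(Set.toFinite S).toFinset, Set.Finite.coe_toFinset _⟩
    rw [Set.ncard_coe_finset] at h3 ⊢
    have := h s h3 ((graphPrime_iff_primeF _).mp hp)
    simpa only [idegree_eq_degree] using this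

def path4 : SimpleGraph (Fin 4) where
  Adj i j := j.val = i.val + 1 ∨ i.val = j.val + 1
  symm := by constructor; intro i j h; rcases h with h | h; exacts [Or.inr h, Or.inl h]
  loopless := by constructor; intro i h; rcases h with h | h <;> omega

instance : DecidableRel path4.Adj :=
  fun a b => inferInstanceAs (Decidable (b.val = a.val + 1 ∨ a.val = b.val + 1))

def bull : SimpleGraph (Fin 5) where
  Adj i j := (j.val = i.val + 1 ∧ j.val ≤ 3) ∨ (i.val = j.val + 1 ∧ i.val ≤ 3) ∨
    (i.val = 4 ∧ (j.val = 1 ∨ j.val = 2)) ∨ (j.val = 4 ∧ (i.val = 1 ∨ i.val = 2))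
  symm := by constructor; intro i j h; tauto
  loopless := by constructor; intro i h; rcases i with ⟨i, _⟩; simp_all; omega

instance : DecidableRel bull.Adj :=
  fun a b => inferInstanceAs (Decidable (_ ∨ _ ∨ _ ∨ _))


section Ext
variable {n : ℕ} (G : SimpleGraph (Fin n)) (u : Fin n)

def ext : SimpleGraph (Fin (n + 2)) where
  Adj i j :=
    (∃ hi : i.val < n, ∃ hj : j.val < n, G.Adj ⟨i.val, hi⟩ ⟨j.val, hj⟩) ∨
    (i.val = n ∧ j.val < n) ∨ (j.val = n ∧ i.val < n) ∨
    (i.val = n + 1 ∧ j.val = u.val) ∨ (j.val = n + 1 ∧ i.val = u.val)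
  symm := by
    constructor
    rintro i j (⟨hi, hj, h⟩ | h | h | h | h)
    · exact Or.inl ⟨hj, hi, h.symm⟩
    · exact Or.inr (Or.inr (Or.inl h))
    · exact Or.inr (Or.inl h)
    · exact Or.inr (Or.inr (Or.inr (Or.inr h)))
    · exact Or.inr (Or.inr (Or.inr (Or.inl h)))
  loopless := by
    constructor
    rintro i (⟨hi, hj, h⟩ | h | h | h | h)
    · exact G.loopless.irrefl _ h
    · omega
    · omega
    · have := u.isLt; omega
    · have := u.isLt; omega

def xx : Fin (n + 2) := ⟨n, by omega⟩
def yy : Fin (n + 2) := ⟨n + 1, by omega⟩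
def emb (i : Fin n) : Fin (n + 2) := ⟨i.val, by omega⟩

variable {G u}

lemma emb_inj : Function.Injective (emb (n := n)) := by
  intro a b h
  simpa [emb, Fin.ext_iff] using h

lemma emb_ne_xx (i : Fin n) : emb i ≠ xx := by
  simp [emb, xx, Fin.ext_iff]; omega
lemma emb_ne_yy (i : Fin n) : emb i ≠ yy := by
  simp [emb, yy, Fin.ext_iff]; omega
lemma xx_ne_yy : (xx : Fin (n+2)) ≠ yy := by
  simp [xx, yy, Fin.ext_iff]

lemma fin_trichotomy (w : Fin (n + 2)) : w = xx ∨ w = yy ∨ ∃ i : Fin n, w = emb i := by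
  rcases lt_trichotomy w.val n with h | h | h
  · exact Or.inr (Or.inr ⟨⟨w.val, h⟩, by simp [emb, Fin.ext_iff]⟩)
  · exact Or.inl (by simp [xx, Fin.ext_iff, h])
  · exact Or.inr (Or.inl (by simp [yy, Fin.ext_iff]; omega))

lemma ext_adj_emb_emb {i j : Fin n} : (ext G u).Adj (emb i) (emb j) ↔ G.Adj i j := by
  constructor
  · rintro (⟨hi, hj, h⟩ | h | h | h | h)
    · exact h
    all_goals (exfalso; simp [emb] at h; omega)
  · intro h
    exact Or.inl ⟨i.isLt, j.isLt, h⟩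

lemma ext_adj_xx_emb (i : Fin n) : (ext G u).Adj xx (emb i) :=
  Or.inr (Or.inl ⟨rfl, i.isLt⟩)

lemma ext_not_adj_xx_yy : ¬ (ext G u).Adj xx yy := by
  have hu := u.isLt
  rintro (⟨hi, -, -⟩ | ⟨-, hb⟩ | ⟨hb, -⟩ | ⟨ha, -⟩ | ⟨-, hb⟩)
  · simp [xx] at hi
  · simp [yy] at hb
  · simp [yy] at hb
  · simp [xx] at ha
  · simp [xx] at hb; omega

lemma ext_adj_yy_emb {i : Fin n} : (ext G u).Adj yy (emb i) ↔ i = u := by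
  constructor
  · rintro (⟨hi, hj, h⟩ | h | h | h | h)
    · exfalso; simp [yy] at hi
    · exfalso; simp [yy] at h
    · exfalso; simp [emb] at h; omega
    · simp [emb, Fin.ext_iff] at h ⊢; exact h.2
    · exfalso; simp [emb] at h; omega
  · rintro rfl
    exact Or.inr (Or.inr (Or.inr (Or.inl ⟨rfl, rfl⟩)))

end Ext

section PrimeLemmas
variable {V : Type*} {G : SimpleGraph V}

lemma not_graphPrime_pair (p q r : V) (hpq : p ≠ q) (hrp : r ≠ p) (hrq : r ≠ q)
    (h : ∀ w, w ≠ p → w ≠ q → (G.Adj p w ↔ G.Adj q w)) : ¬ GraphPrime G := by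
  intro hpr
  refine hpr ⟨{p, q}, (Set.ncard_pair hpq).ge, ?_, ?_⟩
  · intro hu
    have : r ∈ ({p, q} : Set V) := hu ▸ Set.mem_univ r
    rcases this with h1 | h1 <;> simp_all
  · rintro a ha b hb w hw
    simp only [Set.mem_insert_iff, Set.mem_singleton_iff] at ha hb hw
    push_neg at hw
    rcases ha with rfl | rfl <;> rcases hb with rfl | rfl <;>
      first | rfl | (exact h w hw.1 hw.2) | (exact (h w hw.1 hw.2).symm)

lemma not_graphPrime_compl_singleton [Fintype V] [DecidableEq V] (a : V)
    (h3 : 3 ≤ Fintype.card V)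
    (h : ∀ z w, z ≠ a → w ≠ a → (G.Adj z a ↔ G.Adj w a)) : ¬ GraphPrime G := by
  intro hpr
  have hcard : 1 < ({a}ᶜ : Finset V).card := by
    rw [Finset.card_compl]; simp; omega
  obtain ⟨b, hb, c, hc, hbc⟩ := Finset.one_lt_card.mp hcard
  simp only [Finset.mem_compl, Finset.mem_singleton] at hb hc
  refine hpr ⟨{x | x ≠ a}, ?_, ?_, ?_⟩
  · exact (Set.one_lt_ncard (Set.toFinite _)).mpr ⟨b, hb, c, hc, hbc⟩
  · intro hu
    have : a ∈ {x | x ≠ a} := hu ▸ Set.mem_univ a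
    exact this rfl
  · intro p hp q hq w hw
    have hw' : w = a := not_not.mp hw
    subst hw'
    exact h p q hp hq

end PrimeLemmas

section ExtPrime
variable {n : ℕ} {G : SimpleGraph (Fin n)} {u v : Fin n}

lemma deg_one_char (hadj : G.Adj v u) (hdeg : idegree G v = 1) :
    ∀ w, G.Adj v w ↔ w = u := by
  have h1 : (G.neighborSet v).ncard = 1 := by
    rw [← Nat.card_coe_set_eq]; exact hdeg
  obtain ⟨a, ha⟩ := Set.ncard_eq_one.mp h1
  have hu : u ∈ G.neighborSet v := (G.mem_neighborSet v u).mpr hadj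
  rw [ha] at hu
  intro w
  rw [← SimpleGraph.mem_neighborSet, ha, hu]
  rfl

theorem ext_prime (hn : 4 ≤ n) (hadj : G.Adj v u) (hdeg : idegree G v = 1)
    (hGp : GraphPrime G) : GraphPrime (ext G u) := by
  have hv := deg_one_char hadj hdeg
  have hvu : v ≠ u := fun h => G.loopless.irrefl u (h ▸ hadj)
  rintro ⟨S, h2, hne, hS⟩
  by_cases hx : xx ∈ S <;> by_cases hy : yy ∈ S
  · -- A : xx ∈ S, yy ∈ S
    obtain ⟨w, hw⟩ : ∃ w, w ∉ S := by
      by_contra hc; push_neg at hc; exact hne (Set.eq_univ_iff_forall.mpr hc)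
    rcases fin_trichotomy w with rfl | rfl | ⟨w0, rfl⟩
    · exact hw hx
    · exact hw hy
    have hw0u : w0 = u :=
      ext_adj_yy_emb.mp ((hS xx hx yy hy _ hw).mp (ext_adj_xx_emb w0))
    rw [hw0u] at hw
    obtain ⟨z1, hz1u, hz1⟩ : ∃ z : Fin n, z ≠ u ∧ ¬ G.Adj z u := by
      by_contra hc; push_neg at hc
      refine not_graphPrime_compl_singleton u (by simp; omega)
        (fun z w hz hw => by simp [hc z hz, hc w hw]) hGp
    have hz1S : emb z1 ∈ S := by
      by_contra hc
      exact hz1u (ext_adj_yy_emb.mp ((hS xx hx yy hy _ hc).mp (ext_adj_xx_emb z1)))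
    exact hz1 (ext_adj_emb_emb.mp ((hS xx hx (emb z1) hz1S (emb u) hw).mp (ext_adj_xx_emb u)))
  · -- B : xx ∈ S, yy ∉ S
    set S0 : Set (Fin n) := {i | emb i ∈ S} with hS0def
    have huS : u ∉ S0 := by
      intro hc
      exact ext_not_adj_xx_yy
        ((hS xx hx (emb u) hc yy hy).mpr ((ext_adj_yy_emb.mpr rfl).symm))
    have hadj_out : ∀ i ∈ S0, ∀ w0 : Fin n, w0 ∉ S0 → G.Adj i w0 := by
      intro i hi w0 hw0
      exact ext_adj_emb_emb.mp ((hS xx hx (emb i) hi (emb w0) hw0).mp (ext_adj_xx_emb w0))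
    have hSeq : S = insert xx (emb '' S0) := by
      ext w
      constructor
      · intro hw
        rcases fin_trichotomy w with rfl | rfl | ⟨i, rfl⟩
        · exact Set.mem_insert _ _
        · exact absurd hw hy
        · exact Set.mem_insert_of_mem _ ⟨i, hw, rfl⟩
      · rintro (rfl | ⟨i, hi, rfl⟩)
        exacts [hx, hi]
    have hcard : S.ncard = S0.ncard + 1 := by
      rw [hSeq, Set.ncard_insert_of_notMem (by rintro ⟨i, -, h⟩; exact emb_ne_xx i h)
        (Set.toFinite _), Set.ncard_image_of_injective _ emb_inj]
    rcases Nat.lt_or_ge S0.ncard 2 with h1 | h1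
    · have hone : S0.ncard = 1 := by omega
      obtain ⟨z, hz⟩ := Set.ncard_eq_one.mp hone
      have hzS0 : z ∈ S0 := by rw [hz]; rfl
      have hzu : z ≠ u := fun h => huS (h ▸ hzS0)
      have hzad : ∀ w0, w0 ≠ z → G.Adj z w0 := by
        intro w0 hne0
        exact hadj_out z hzS0 w0 (by rw [hz]; simpa)
      by_cases hzv : z = v
      · subst hzv
        obtain ⟨w0, hw0⟩ : ∃ w0 : Fin n, w0 ≠ z ∧ w0 ≠ u := by
          have hcc : 0 < ({z, u}ᶜ : Finset (Fin n)).card := by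
            rw [Finset.card_compl]
            have := Finset.card_insert_le z ({u} : Finset (Fin n))
            simp only [Finset.card_singleton] at this
            simp only [Fintype.card_fin]
            omega
          obtain ⟨w0, hw0⟩ := Finset.card_pos.mp hcc
          simp only [Finset.mem_compl, Finset.mem_insert, Finset.mem_singleton, not_or] at hw0
          exact ⟨w0, hw0⟩
        exact hw0.2 ((hv w0).mp (hzad w0 hw0.1))
      · exact hzu ((hv z).mp ((hzad v (fun h => hzv h.symm)).symm))
    · refine hGp ⟨S0, h1, fun hu0 => huS (by rw [hu0]; trivial), ?_⟩
      intro a ha b hb w0 hw0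
      simp [hadj_out a ha w0 hw0, hadj_out b hb w0 hw0]
  · -- C : xx ∉ S, yy ∈ S
    have hsub : S ⊆ {yy} := by
      intro s hs
      rcases fin_trichotomy s with rfl | rfl | ⟨i, rfl⟩
      · exact absurd hs hx
      · rfl
      · exact absurd (((hS (emb i) hs yy hy xx hx).mp
          ((ext_adj_xx_emb i).symm)).symm) ext_not_adj_xx_yy
    have := Set.ncard_le_ncard hsub (Set.finite_singleton yy)
    rw [Set.ncard_singleton] at this
    omega
  · -- D : xx ∉ S, yy ∉ S
    set S0 : Set (Fin n) := {i | emb i ∈ S} with hS0def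
    have hSeq : S = emb '' S0 := by
      ext w
      constructor
      · intro hw
        rcases fin_trichotomy w with rfl | rfl | ⟨i, rfl⟩
        · exact absurd hw hx
        · exact absurd hw hy
        · exact ⟨i, hw, rfl⟩
      · rintro ⟨i, hi, rfl⟩; exact hi
    have hcard : S0.ncard = S.ncard := by
      rw [hSeq, Set.ncard_image_of_injective _ emb_inj]
    have h2' : 2 ≤ S0.ncard := by omega
    obtain ⟨a, ha, b, hb, hab⟩ :=
      (Set.one_lt_ncard (Set.toFinite _)).mp (by omega : 1 < S0.ncard)
    have huS : u ∉ S0 := by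
      intro hu0
      have key : ∀ i ∈ S0, i ≠ u → False := by
        intro i hi hiu
        have h3 := hS (emb u) hu0 (emb i) hi yy hy
        have h4 : (ext G u).Adj (emb u) yy := (ext_adj_yy_emb.mpr rfl).symm
        exact hiu (ext_adj_yy_emb.mp (h3.mp h4).symm)
      rcases eq_or_ne a u with rfl | hau
      · exact key b hb (fun h => hab h.symm)
      · exact key a ha hau
    refine hGp ⟨S0, h2', fun hu0 => huS (by rw [hu0]; trivial), ?_⟩
    intro p hp q hq w0 hw0
    have := hS (emb p) hp (emb q) hq (emb w0) hw0
    rwa [ext_adj_emb_emb, ext_adj_emb_emb] at this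

end ExtPrime

section IsoLemmas
variable {A B : Type*} {G1 : SimpleGraph A} {G2 : SimpleGraph B}

lemma idegree_iso (e : G1 ≃g G2) (a : A) : idegree G2 (e a) = idegree G1 a :=
  Nat.card_congr (e.mapNeighborSet a).symm

lemma GraphPrime.of_iso (e : G1 ≃g G2) (h : GraphPrime G1) : GraphPrime G2 := by
  rintro ⟨S, h2, hne, hS⟩
  refine h ⟨⇑e.symm.toEquiv '' S, ?_, ?_, ?_⟩
  · rwa [Set.ncard_image_of_injective _ e.symm.toEquiv.injective]
  · intro hu
    apply hne
    have := congrArg (Set.image ⇑e.toEquiv) hu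
    rwa [Set.image_image, Set.image_univ, Equiv.range_eq_univ,
      show (fun x => e.toEquiv (e.symm.toEquiv x)) '' S = S by
        simp [Set.image_congr' (fun x => e.toEquiv.apply_symm_apply x)]] at this
  · rintro _ ⟨a, ha, rfl⟩ _ ⟨b, hb, rfl⟩ w hw
    have hew : e w ∈ S → False := fun hc => hw ⟨e w, hc, e.toEquiv.symm_apply_apply w⟩
    have h1 := hS a ha b hb (e w) hew
    have ga : G1.Adj (e.symm.toEquiv a) w ↔ G2.Adj a (e w) := by
      rw [← e.map_adj_iff]; simp
    have gb : G1.Adj (e.symm.toEquiv b) w ↔ G2.Adj b (e w) := by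
      rw [← e.map_adj_iff]; simp
    rw [ga, gb]; exact h1

lemma graphPrime_iff_iso (e : G1 ≃g G2) : GraphPrime G1 ↔ GraphPrime G2 :=
  ⟨fun h => h.of_iso e, fun h => h.of_iso e.symm⟩

lemma inH_apply_iso (hH : InH G1) (S1 : Set A) (S : Set B)
    (e : (G1.induce S1) ≃g (G2.induce S))
    (h3 : 3 ≤ S1.ncard) (hc : S1.ncard = S.ncard) (hp : GraphPrime (G2.induce S)) :
    (∃ x, idegree (G2.induce S) x = 1) ∧ (∃ x, idegree (G2.induce S) x = S.ncard - 2) := by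
  obtain ⟨⟨a, ha⟩, ⟨b, hb⟩⟩ := hH S1 h3 ((graphPrime_iff_iso e).mpr hp)
  exact ⟨⟨e a, by rw [idegree_iso e]; exact ha⟩, ⟨e b, by rw [idegree_iso e, hb, hc]⟩⟩

end IsoLemmas

section ExtInH
variable {n : ℕ} {G : SimpleGraph (Fin n)} {u v : Fin n}

lemma card_coe_eq (S : Set (Fin (n+2))) [Fintype ↥S] : Fintype.card ↥S = S.ncard := by
  rw [← Nat.card_eq_fintype_card, Nat.card_coe_set_eq]

theorem ext_inH (hadj : G.Adj v u) (hdeg : idegree G v = 1) (hH : InH G) :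
    InH (ext G u) := by
  classical
  have hv := deg_one_char hadj hdeg
  have hvu : v ≠ u := fun h => G.loopless.irrefl u (h ▸ hadj)
  intro S h3 hp
  have hcard3 : 3 ≤ Fintype.card ↥S := by rw [card_coe_eq]; exact h3
  by_cases hx : xx ∈ S <;> by_cases hy : yy ∈ S
  · -- A : xx ∈ S, yy ∈ S
    by_cases hu0 : emb u ∈ S
    · constructor
      · refine ⟨⟨yy, hy⟩, ?_⟩
        have hNS : ((ext G u).induce S).neighborSet ⟨yy, hy⟩ = {⟨emb u, hu0⟩} := by
          ext z
          simp only [SimpleGraph.mem_neighborSet, Set.mem_singleton_iff]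
          constructor
          · intro hz
            have hz' : (ext G u).Adj yy z.val := hz
            rcases fin_trichotomy z.val with hzx | hzy | ⟨i, hzi⟩
            · rw [hzx] at hz'; exact absurd hz'.symm ext_not_adj_xx_yy
            · rw [hzy] at hz'; exact absurd hz' ((ext G u).loopless.irrefl _)
            · rw [hzi] at hz'
              exact Subtype.ext (by rw [hzi, ext_adj_yy_emb.mp hz'])
          · rintro rfl
            exact (ext_adj_yy_emb.mpr rfl : (ext G u).Adj yy (emb u))
        rw [idegree, hNS, Nat.card_coe_set_eq, Set.ncard_singleton]
      · refine ⟨⟨xx, hx⟩, ?_⟩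
        have hNS : ((ext G u).induce S).neighborSet ⟨xx, hx⟩ =
            ({⟨xx, hx⟩, ⟨yy, hy⟩} : Set ↥S)ᶜ := by
          ext z
          simp only [SimpleGraph.mem_neighborSet, Set.mem_compl_iff, Set.mem_insert_iff,
            Set.mem_singleton_iff, not_or]
          constructor
          · intro hz
            have hz' : (ext G u).Adj xx z.val := hz
            constructor
            · intro h; rw [h] at hz'; exact absurd hz' ((ext G u).loopless.irrefl _)
            · intro h; rw [h] at hz'; exact absurd hz' ext_not_adj_xx_yy
          · rintro ⟨h1, h2⟩
            rcases fin_trichotomy z.val with hzx | hzy | ⟨i, hzi⟩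
            · exact absurd (Subtype.ext hzx) h1
            · exact absurd (Subtype.ext hzy) h2
            · show (ext G u).Adj xx z.val
              rw [hzi]; exact ext_adj_xx_emb i
        have hpair : ({⟨xx, hx⟩, ⟨yy, hy⟩} : Set ↥S).ncard = 2 :=
          Set.ncard_pair (fun h => xx_ne_yy (congrArg Subtype.val h))
        have hcompl := Set.ncard_add_ncard_compl ({⟨xx, hx⟩, ⟨yy, hy⟩} : Set ↥S)
          (Set.toFinite _) (Set.toFinite _)
        rw [idegree, hNS, Nat.card_coe_set_eq]
        rw [hpair, Nat.card_eq_fintype_card, card_coe_eq] at hcompl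
        omega
    · -- emb u ∉ S : yy isolated, contradiction
      exfalso
      refine not_graphPrime_compl_singleton (⟨yy, hy⟩ : ↥S) hcard3 ?_ hp
      have key : ∀ z : ↥S, z ≠ ⟨yy, hy⟩ → ¬ (ext G u).Adj z.val yy := by
        intro z hz hz'
        rcases fin_trichotomy z.val with hzx | hzy | ⟨i, hzi⟩
        · rw [hzx] at hz'; exact ext_not_adj_xx_yy hz'
        · exact hz (Subtype.ext hzy)
        · rw [hzi] at hz'
          have : i = u := ext_adj_yy_emb.mp hz'.symm
          exact hu0 (by rw [← this, ← hzi]; exact z.prop)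
      intro z w hz hw
      simp [key z hz, key w hw]
  · -- B : xx ∈ S, yy ∉ S : xx near-universal, contradiction
    exfalso
    refine not_graphPrime_compl_singleton (⟨xx, hx⟩ : ↥S) hcard3 ?_ hp
    have key : ∀ z : ↥S, z ≠ ⟨xx, hx⟩ → (ext G u).Adj z.val xx := by
      intro z hz
      rcases fin_trichotomy z.val with hzx | hzy | ⟨i, hzi⟩
      · exact absurd (Subtype.ext hzx) hz
      · exact absurd (hzy ▸ z.prop) hy
      · rw [hzi]; exact (ext_adj_xx_emb i).symm
    intro z w hz hw
    simp [key z hz, key w hw]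
  · -- C : xx ∉ S, yy ∈ S
    by_cases hu0 : emb u ∈ S
    · by_cases hv0 : emb v ∈ S
      · -- {emb v, yy} homogeneous pair, contradiction
        exfalso
        refine not_graphPrime_pair (⟨emb v, hv0⟩ : ↥S) ⟨yy, hy⟩ ⟨emb u, hu0⟩
          (fun h => emb_ne_yy v (congrArg Subtype.val h))
          (fun h => hvu (emb_inj (congrArg Subtype.val h)).symm)
          (fun h => emb_ne_yy u (congrArg Subtype.val h)) ?_ hp
        intro w hwp hwq
        rcases fin_trichotomy w.val with hwx | hwy | ⟨i, hwi⟩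
        · exact absurd (hwx ▸ w.prop) hx
        · exact absurd (Subtype.ext hwy) hwq
        · have hiv : i ≠ v := fun h => hwp (Subtype.ext (by rw [hwi, h]))
          show (ext G u).Adj (emb v) w.val ↔ (ext G u).Adj yy w.val
          rw [hwi, ext_adj_emb_emb, ext_adj_yy_emb, hv i]
      · -- swap yy ↔ v : iso with S1 = insert v S0
        set S0 : Set (Fin n) := {i | emb i ∈ S} with hS0def
        have hvS0 : v ∉ S0 := hv0
        have huS0 : u ∈ S0 := hu0
        have hSeq : S = insert yy (emb '' S0) := by
          ext w
          constructor
          · intro hw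
            rcases fin_trichotomy w with rfl | rfl | ⟨i, rfl⟩
            · exact absurd hw hx
            · exact Set.mem_insert _ _
            · exact Set.mem_insert_of_mem _ ⟨i, hw, rfl⟩
          · rintro (rfl | ⟨i, hi, rfl⟩)
            exacts [hy, hi]
        have hcardS : S.ncard = S0.ncard + 1 := by
          rw [hSeq, Set.ncard_insert_of_notMem (by rintro ⟨i, -, h⟩; exact emb_ne_yy i h)
            (Set.toFinite _), Set.ncard_image_of_injective _ emb_inj]
        have hcardS1 : (insert v S0).ncard = S0.ncard + 1 :=
          Set.ncard_insert_of_notMem hvS0 (Set.toFinite _)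
        -- the equiv
        have hmem : ∀ a : ↥(insert v S0), a.val ≠ v → emb a.val ∈ S := by
          intro a ha
          rcases a.prop with h | h
          · exact absurd h ha
          · exact h
        let f : ↥(insert v S0) → ↥S := fun a =>
          if h : a.val = v then ⟨yy, hy⟩ else ⟨emb a.val, hmem a h⟩
        have hbij : Function.Bijective f := by
          constructor
          · intro a b hab
            by_cases ha : a.val = v <;> by_cases hb : b.val = v
            · exact Subtype.ext (ha.trans hb.symm)
            · simp only [f, dif_pos ha, dif_neg hb] at hab
              exact absurd (congrArg Subtype.val hab).symm (emb_ne_yy b.val)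
            · simp only [f, dif_pos hb, dif_neg ha] at hab
              exact absurd (congrArg Subtype.val hab) (emb_ne_yy a.val)
            · simp only [f, dif_neg ha, dif_neg hb] at hab
              exact Subtype.ext (emb_inj (congrArg Subtype.val hab))
          · intro s
            rcases fin_trichotomy s.val with hsx | hsy | ⟨i, hsi⟩
            · exact absurd (hsx ▸ s.prop) hx
            · refine ⟨⟨v, Set.mem_insert _ _⟩, ?_⟩
              simp only [f, dif_pos]
              exact (Subtype.ext hsy.symm)
            · have hiS0 : i ∈ S0 := by rw [hS0def]; exact Set.mem_setOf.mpr (hsi ▸ s.prop)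
              have hiv : i ≠ v := fun h => hv0 (h ▸ (hsi ▸ s.prop))
              refine ⟨⟨i, Set.mem_insert_of_mem _ hiS0⟩, ?_⟩
              simp only [f, dif_neg hiv]
              exact Subtype.ext hsi.symm
        let eqv : ↥(insert v S0) ≃ ↥S := Equiv.ofBijective f hbij
        have hmap : ∀ a b : ↥(insert v S0),
            ((ext G u).induce S).Adj (eqv a) (eqv b) ↔ (G.induce (insert v S0)).Adj a b := by
          intro a b
          by_cases ha : a.val = v <;> by_cases hb : b.val = v
          · have hab : a = b := Subtype.ext (ha.trans hb.symm)
            subst hab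
            exact iff_of_false (((ext G u).induce S).loopless.irrefl _)
              ((G.induce (insert v S0)).loopless.irrefl _)
          · show (ext G u).Adj (f a).val (f b).val ↔ G.Adj a.val b.val
            simp only [f, dif_pos ha, dif_neg hb]
            rw [ha]
            show (ext G u).Adj yy (emb b.val) ↔ G.Adj v b.val
            rw [ext_adj_yy_emb, hv b.val]
          · show (ext G u).Adj (f a).val (f b).val ↔ G.Adj a.val b.val
            simp only [f, dif_pos hb, dif_neg ha]
            rw [hb]
            show (ext G u).Adj (emb a.val) yy ↔ G.Adj a.val v
            rw [(ext G u).adj_comm, G.adj_comm, ext_adj_yy_emb, hv a.val]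
          · show (ext G u).Adj (f a).val (f b).val ↔ G.Adj a.val b.val
            simp only [f, dif_neg ha, dif_neg hb]
            exact ext_adj_emb_emb
        let iso : (G.induce (insert v S0)) ≃g ((ext G u).induce S) :=
          { toEquiv := eqv, map_rel_iff' := fun {a b} => hmap a b }
        exact inH_apply_iso hH _ S iso (by omega) (by omega) hp
    · -- emb u ∉ S : yy isolated, contradiction
      exfalso
      refine not_graphPrime_compl_singleton (⟨yy, hy⟩ : ↥S) hcard3 ?_ hp
      have key : ∀ z : ↥S, z ≠ ⟨yy, hy⟩ → ¬ (ext G u).Adj z.val yy := by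
        intro z hz hz'
        rcases fin_trichotomy z.val with hzx | hzy | ⟨i, hzi⟩
        · exact absurd (hzx ▸ z.prop) hx
        · exact hz (Subtype.ext hzy)
        · rw [hzi] at hz'
          have : i = u := ext_adj_yy_emb.mp hz'.symm
          exact hu0 (by rw [← this, ← hzi]; exact z.prop)
      intro z w hz hw
      simp [key z hz, key w hw]
  · -- D : xx ∉ S, yy ∉ S : iso with S0
    set S0 : Set (Fin n) := {i | emb i ∈ S} with hS0def
    have hold : ∀ s : ↥S, ∃ i : Fin n, s.val = emb i ∧ i ∈ S0 := by
      intro s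
      rcases fin_trichotomy s.val with hsx | hsy | ⟨i, hsi⟩
      · exact absurd (hsx ▸ s.prop) hx
      · exact absurd (hsy ▸ s.prop) hy
      · exact ⟨i, hsi, Set.mem_setOf.mpr (hsi ▸ s.prop)⟩
    have hSeq : S = emb '' S0 := by
      ext w
      constructor
      · intro hw
        obtain ⟨i, hi1, hi2⟩ := hold ⟨w, hw⟩
        exact ⟨i, hi2, hi1.symm⟩
      · rintro ⟨i, hi, rfl⟩; exact hi
    have hcardS : S0.ncard = S.ncard := by
      rw [hSeq, Set.ncard_image_of_injective _ emb_inj]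
    let f : ↥S0 → ↥S := fun a => ⟨emb a.val, a.prop⟩
    have hbij : Function.Bijective f := by
      constructor
      · intro a b hab
        exact Subtype.ext (emb_inj (congrArg Subtype.val hab))
      · intro s
        obtain ⟨i, hi1, hi2⟩ := hold s
        exact ⟨⟨i, hi2⟩, Subtype.ext hi1.symm⟩
    let eqv : ↥S0 ≃ ↥S := Equiv.ofBijective f hbij
    have hmap : ∀ a b : ↥S0,
        ((ext G u).induce S).Adj (eqv a) (eqv b) ↔ (G.induce S0).Adj a b := by
      intro a b
      show (ext G u).Adj (emb a.val) (emb b.val) ↔ G.Adj a.val b.val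
      exact ext_adj_emb_emb
    let iso : (G.induce S0) ≃g ((ext G u).induce S) :=
      { toEquiv := eqv, map_rel_iff' := fun {a b} => hmap a b }
    exact inH_apply_iso hH _ S iso (by omega) hcardS hp

end ExtInH

section Final
variable {n : ℕ} {G : SimpleGraph (Fin n)} {u : Fin n}

lemma ext_idegree_yy : idegree (ext G u) yy = 1 := by
  have hNS : (ext G u).neighborSet yy = {emb u} := by
    ext z
    simp only [SimpleGraph.mem_neighborSet, Set.mem_singleton_iff]
    constructor
    · intro hz
      rcases fin_trichotomy z with rfl | rfl | ⟨i, rfl⟩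
      · exact absurd hz.symm ext_not_adj_xx_yy
      · exact absurd hz ((ext G u).loopless.irrefl _)
      · rw [ext_adj_yy_emb.mp hz]
    · rintro rfl; exact ext_adj_yy_emb.mpr rfl
  rw [idegree, hNS, Nat.card_coe_set_eq, Set.ncard_singleton]

end Final

/-- For every integer `h ≥ 4` there is a prime graph in `𝓗` with exactly `h` vertices. -/
theorem stmt_5 : ∀ h : ℕ, 4 ≤ h → ∃ G : SimpleGraph (Fin h), GraphPrime G ∧ InH G := by
  have key : ∀ h : ℕ, 4 ≤ h → ∃ G : SimpleGraph (Fin h),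
      GraphPrime G ∧ InH G ∧ ∃ v u : Fin h, G.Adj v u ∧ idegree G v = 1 := by
    intro h
    induction h using Nat.strong_induction_on with
    | _ h ih =>
      intro h4
      rcases Nat.lt_or_ge h 6 with h6 | h6
      · interval_cases h
        · refine ⟨path4, ?_, ?_, 0, 1, by decide, ?_⟩
          · rw [graphPrime_iff_primeF]; decide
          · rw [inH_iff_inHF]; decide
          · rw [idegree_eq_degree]; decide
        · refine ⟨bull, ?_, ?_, 0, 1, by decide, ?_⟩
          · rw [graphPrime_iff_primeF]; decide
          · rw [inH_iff_inHF]; decide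
          · rw [idegree_eq_degree]; decide
      · obtain ⟨m, rfl⟩ : ∃ m, h = m + 2 := ⟨h - 2, by omega⟩
        obtain ⟨G, hGp, hGH, v, u, hadj, hdeg⟩ := ih m (by omega) (by omega)
        exact ⟨ext G u, ext_prime (by omega) hadj hdeg hGp, ext_inH hadj hdeg hGH,
          yy, emb u, ext_adj_yy_emb.mpr rfl, ext_idegree_yy⟩
  intro h h4
  obtain ⟨G, h1, h2, -⟩ := key h h4
  exact ⟨G, h1, h2⟩
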